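/- Let F be a decomposable OR-AND network over a finite index set ι with finite nonempty domains X i. Define sat(F) ∈ Bool recursively: sat of a constraint leaf (i, φ) is true iff there exists t ∈ X i with φ t = true; sat of an And node is the conjunction of the sat-values of its children; sat of an Or node is the disjunction of the sat-values of its children. Then there exists a full assignment x : ∀ i, X i with eval F x = true if and only if sat(F) = true. -/

import Mathlib

set_option maxRecDepth 8000


/-- An OR-AND network (OAN) over variables indexed by `ι` with finite domains
`X i`: a leaf is a unary constraint `(i, φ)` with `φ : X i → Bool`; internal
nodes are And or Or nodes with a finite list of children. -/
inductive OAN (ι : Type) (X : ι → Type) where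
  | leaf : (i : ι) → (X i → Bool) → OAN ι X
  | and : List (OAN ι X) → OAN ι X
  | or : List (OAN ι X) → OAN ι X

namespace OAN

variable {ι : Type} [DecidableEq ι] {X : ι → Type} [∀ i, Fintype (X i)]

/-- Evaluation of an OAN at a full assignment: a leaf `(i, φ)` evaluates to
`φ (x i)`, an And node to the conjunction of its children's values, and an Or
node to the disjunction of its children's values. -/
def eval : OAN ι X → ((i : ι) → X i) → Bool
  | .leaf i φ, x => φ (x i)
  | .and l, x => l.attach.all fun c => c.1.eval x
  | .or l, x => l.attach.any fun c => c.1.eval x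
decreasing_by all_goals (simp_wf; have := List.sizeOf_lt_of_mem c.2; omega)

/-- The scope of an OAN: the set of variable indices appearing in its leaves. -/
def scope : OAN ι X → Finset ι
  | .leaf i _ => {i}
  | .and l => (l.attach.map fun c => c.1.scope).foldr (· ∪ ·) ∅
  | .or l => (l.attach.map fun c => c.1.scope).foldr (· ∪ ·) ∅
decreasing_by all_goals (simp_wf; have := List.sizeOf_lt_of_mem c.2; omega)

/-- An OAN is decomposable iff the children of every And node have pairwise
disjoint scopes. -/
inductive Decomposable : OAN ι X → Prop
  | leaf (i : ι) (φ : X i → Bool) : Decomposable (.leaf i φ)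
  | and {l : List (OAN ι X)} :
      (∀ G ∈ l, Decomposable G) →
      l.Pairwise (fun G H => Disjoint G.scope H.scope) →
      Decomposable (.and l)
  | or {l : List (OAN ι X)} :
      (∀ G ∈ l, Decomposable G) → Decomposable (.or l)

/-- The bottom-up pass `sat` (summation in the Boolean semiring): `sat` of a
constraint leaf `(i, φ)` is `true` iff some `t : X i` satisfies `φ t = true`,
of an And node the conjunction of its children's values, of an Or node the
disjunction of its children's values. -/
def sat : OAN ι X → Bool
  | .leaf _ φ => decide (∃ t, φ t = true)
  | .and l => l.attach.all fun c => c.1.sat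
  | .or l => l.attach.any fun c => c.1.sat
decreasing_by all_goals (simp_wf; have := List.sizeOf_lt_of_mem c.2; omega)

end OAN

namespace OANAux

open OAN

variable {ι : Type} [DecidableEq ι] {X : ι → Type} [∀ i, Fintype (X i)]

lemma mem_foldr_union {α : Type} [DecidableEq α] {L : List (Finset α)} {s : Finset α}
    (hs : s ∈ L) : s ⊆ L.foldr (· ∪ ·) ∅ := by
  induction L with
  | nil => simp at hs
  | cons a L ih =>
    simp only [List.foldr_cons]
    rcases List.mem_cons.1 hs with h | h
    · subst h; exact Finset.subset_union_left
    · exact (ih h).trans Finset.subset_union_right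

lemma scope_subset_and {G : OAN ι X} {l : List (OAN ι X)} (hG : G ∈ l) :
    G.scope ⊆ (OAN.and l).scope := by
  rw [OAN.scope]
  exact mem_foldr_union (List.mem_map.2 ⟨⟨G, hG⟩, List.mem_attach _ _, rfl⟩)

lemma scope_subset_or {G : OAN ι X} {l : List (OAN ι X)} (hG : G ∈ l) :
    G.scope ⊆ (OAN.or l).scope := by
  rw [OAN.scope]
  exact mem_foldr_union (List.mem_map.2 ⟨⟨G, hG⟩, List.mem_attach _ _, rfl⟩)

lemma eval_congr {F : OAN ι X} (h : F.Decomposable) :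
    ∀ x y : (i : ι) → X i, (∀ i ∈ F.scope, x i = y i) → F.eval x = F.eval y := by
  induction h with
  | leaf i φ =>
    intro x y hxy
    simp [OAN.eval, hxy i (by simp [OAN.scope])]
  | @and l hl hpw ih =>
    intro x y hxy
    simp only [OAN.eval]
    rw [Bool.eq_iff_iff]
    simp only [List.all_eq_true]
    constructor
    · intro h c hc
      rw [← ih c.1 c.2 x y fun i hi => hxy i (scope_subset_and c.2 hi)]
      exact h c hc
    · intro h c hc
      rw [ih c.1 c.2 x y fun i hi => hxy i (scope_subset_and c.2 hi)]
      exact h c hc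
  | @or l hl ih =>
    intro x y hxy
    simp only [OAN.eval]
    rw [Bool.eq_iff_iff]
    simp only [List.any_eq_true]
    constructor
    · rintro ⟨c, hc, h⟩
      exact ⟨c, hc, by rw [← ih c.1 c.2 x y fun i hi => hxy i (scope_subset_or c.2 hi)]; exact h⟩
    · rintro ⟨c, hc, h⟩
      exact ⟨c, hc, by rw [ih c.1 c.2 x y fun i hi => hxy i (scope_subset_or c.2 hi)]; exact h⟩

lemma eval_imp_sat {F : OAN ι X} (h : F.Decomposable) (x : (i : ι) → X i)
    (hx : F.eval x = true) : F.sat = true := by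
  induction h with
  | leaf i φ =>
    simp only [OAN.eval] at hx
    simp only [OAN.sat, decide_eq_true_eq]
    exact ⟨x i, hx⟩
  | @and l hl hpw ih =>
    simp only [OAN.eval, List.all_eq_true] at hx
    simp only [OAN.sat, List.all_eq_true]
    exact fun c hc => ih c.1 c.2 (hx c hc)
  | @or l hl ih =>
    simp only [OAN.eval, List.any_eq_true] at hx
    simp only [OAN.sat, List.any_eq_true]
    obtain ⟨c, hc, h⟩ := hx
    exact ⟨c, hc, ih c.1 c.2 h⟩

lemma combine [∀ i, Nonempty (X i)] :
    ∀ (l : List (OAN ι X)), (∀ G ∈ l, G.Decomposable) →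
    l.Pairwise (fun G H => Disjoint G.scope H.scope) →
    (∀ G ∈ l, ∃ x : (i : ι) → X i, G.eval x = true) →
    ∃ x : (i : ι) → X i, ∀ G ∈ l, G.eval x = true := by
  intro l
  induction l with
  | nil => exact fun _ _ _ => ⟨fun i => Classical.arbitrary _, by simp⟩
  | cons G l ihl =>
    intro hdec hpw hex
    obtain ⟨xr, hxr⟩ := ihl (fun H hH => hdec H (List.mem_cons_of_mem _ hH))
      (List.Pairwise.sublist (List.sublist_cons_self _ _) hpw)
      (fun H hH => hex H (List.mem_cons_of_mem _ hH))
    obtain ⟨xG, hxG⟩ := hex G (List.mem_cons_self)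
    classical
    refine ⟨fun i => if i ∈ G.scope then xG i else xr i, ?_⟩
    intro H hH
    rcases List.mem_cons.1 hH with h | h
    · subst h
      rw [eval_congr (hdec H (List.mem_cons_self)) _ xG (fun i hi => by simp [hi])]
      exact hxG
    · have hdisj := (List.pairwise_cons.1 hpw).1 H h
      rw [eval_congr (hdec H (List.mem_cons_of_mem _ h)) _ xr (fun i hi => by
        have : i ∉ G.scope := fun hG => (Finset.disjoint_right.1 hdisj hi) hG
        simp [this])]
      exact hxr H h

lemma sat_imp_eval [∀ i, Nonempty (X i)] {F : OAN ι X} (h : F.Decomposable)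
    (hs : F.sat = true) : ∃ x : (i : ι) → X i, F.eval x = true := by
  induction h with
  | leaf i φ =>
    simp only [OAN.sat, decide_eq_true_eq] at hs
    obtain ⟨t, ht⟩ := hs
    classical
    refine ⟨fun j => if hj : j = i then hj ▸ t else Classical.arbitrary _, ?_⟩
    simp [OAN.eval, ht]
  | @and l hl hpw ih =>
    simp only [OAN.sat, List.all_eq_true] at hs
    obtain ⟨x, hx⟩ := combine l hl hpw
      (fun G hG => ih G hG (hs ⟨G, hG⟩ (List.mem_attach _ _)))
    exact ⟨x, by simp only [OAN.eval, List.all_eq_true]; exact fun c hc => hx c.1 c.2⟩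
  | @or l hl ih =>
    simp only [OAN.sat, List.any_eq_true] at hs
    obtain ⟨c, hc, h⟩ := hs
    obtain ⟨x, hx⟩ := ih c.1 c.2 h
    refine ⟨x, ?_⟩
    simp only [OAN.eval, List.any_eq_true]
    exact ⟨c, List.mem_attach _ _, hx⟩

end OANAux

/-- Corollary 4 (every decomposable CSP can be solved in time linear in its
size): a decomposable OR-AND network has a satisfying full assignment if and
only if the linear-time bottom-up pass `sat` returns `true`. -/
theorem decomposable_csp_solvable_iff_sat
    {ι : Type} [Fintype ι] [DecidableEq ι] {X : ι → Type}
    [∀ i, Fintype (X i)] [∀ i, Nonempty (X i)]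
    (F : OAN ι X) (hdec : F.Decomposable) :
    (∃ x : (i : ι) → X i, F.eval x = true) ↔ F.sat = true := by
  constructor
  · rintro ⟨x, hx⟩
    exact OANAux.eval_imp_sat hdec x hx
  · exact OANAux.sat_imp_eval hdec
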